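/- Let φ : ℕ → (0,∞) be monotonically increasing with φ(n) → ∞ as n → ∞, and suppose limsup_{n→∞} n/φ(n) = +∞. Then the set E_max^φ = {x ∈ [0,1] : liminf_{n→∞} r_n(x)/φ(n) = 0 and limsup_{n→∞} r_n(x)/φ(n) = +∞} is residual in [0,1], i.e. its complement in [0,1] is of the first category (equivalently, E_max^φ is comeagre in [0,1]). -/

import Mathlib

open Filter MeasureTheory Set

/-- The `k`-th binary digit (for `k ≥ 1`) of a real number `x`,
namely `x_k = ⌊x * 2^k⌋ mod 2`, so that `x = Σ_{k ≥ 1} x_k / 2^k` for `x ∈ [0,1)`. -/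
noncomputable def dyadicDigit (x : ℝ) (k : ℕ) : ℕ :=
  ⌊x * 2 ^ k⌋.toNat % 2

/-- The run-length function: `runLen x n` is the length of the longest run of `1`'s
among the first `n` dyadic digits `x_1, …, x_n` of `x`. -/
noncomputable def runLen (x : ℝ) (n : ℕ) : ℕ :=
  sSup {ℓ : ℕ | ∃ i, i + ℓ ≤ n ∧ ∀ j < ℓ, dyadicDigit x (i + j + 1) = 1}

/-- The exceptional set `E_max^φ` of points of `[0,1]` where `r_n(x)/φ(n)` has
liminf `0` and limsup `+∞`. -/
noncomputable def Emax (φ : ℕ → ℝ) : Set ℝ :=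
  {x ∈ Set.Icc (0 : ℝ) 1 |
    atTop.liminf (fun n => ((runLen x n / φ n : ℝ) : EReal)) = 0 ∧
    atTop.limsup (fun n => ((runLen x n / φ n : ℝ) : EReal)) = ⊤}


lemma runLen_zero_mem (x : ℝ) (n : ℕ) :
    0 ∈ {ℓ : ℕ | ∃ i, i + ℓ ≤ n ∧ ∀ j < ℓ, dyadicDigit x (i + j + 1) = 1} :=
  ⟨0, by simp, fun j hj => absurd hj (Nat.not_lt_zero j)⟩

lemma runLen_bddAbove (x : ℝ) (n : ℕ) :
    BddAbove {ℓ : ℕ | ∃ i, i + ℓ ≤ n ∧ ∀ j < ℓ, dyadicDigit x (i + j + 1) = 1} :=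
  ⟨n, fun ℓ ⟨i, hi, _⟩ => by omega⟩

lemma le_runLen {x : ℝ} {n ℓ : ℕ} (i : ℕ) (h : i + ℓ ≤ n)
    (hd : ∀ j < ℓ, dyadicDigit x (i + j + 1) = 1) : ℓ ≤ runLen x n :=
  le_csSup (runLen_bddAbove x n) ⟨i, h, hd⟩

lemma runLen_le_of {x : ℝ} {n K : ℕ}
    (h : ∀ ℓ i, i + ℓ ≤ n → (∀ j < ℓ, dyadicDigit x (i + j + 1) = 1) → ℓ ≤ K) :
    runLen x n ≤ K :=
  csSup_le ⟨0, runLen_zero_mem x n⟩ (fun ℓ ⟨i, hi, hd⟩ => h ℓ i hi hd)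

lemma dyadicDigit_of_mem {j n k : ℕ} (hkn : k ≤ n) {x : ℝ}
    (hx : (j : ℝ) / 2 ^ n ≤ x) (hx' : x < ((j : ℝ) + 1) / 2 ^ n) :
    dyadicDigit x k = (j / 2 ^ (n - k)) % 2 := by
  set d := n - k with hd
  set M := j / 2 ^ d with hM
  have hpow : (2 : ℝ) ^ n = 2 ^ k * 2 ^ d := by
    rw [← pow_add]; congr 1; omega
  have h2d : (0:ℝ) < 2 ^ d := by positivity
  have h2k : (0:ℝ) < 2 ^ k := by positivity
  have hmd : j % 2 ^ d + 2 ^ d * M = j := Nat.mod_add_div j (2 ^ d)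
  have hmlt : j % 2 ^ d < 2 ^ d := Nat.mod_lt _ (by positivity)
  have h1 : (M : ℝ) * 2 ^ d ≤ (j : ℝ) := by
    have : M * 2 ^ d ≤ j := Nat.div_mul_le_self j (2 ^ d)
    exact_mod_cast this
  have h2 : (j : ℝ) + 1 ≤ ((M : ℝ) + 1) * 2 ^ d := by
    have : j + 1 ≤ (M + 1) * 2 ^ d := by nlinarith [hmd, hmlt]
    exact_mod_cast this
  have hxl : (j : ℝ) ≤ x * 2 ^ n := (div_le_iff₀ (by positivity)).1 hx
  have hxu : x * 2 ^ n < (j : ℝ) + 1 := (lt_div_iff₀ (by positivity)).1 hx'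
  rw [hpow] at hxl hxu
  have hfloor : ⌊x * 2 ^ k⌋ = (M : ℤ) := by
    rw [Int.floor_eq_iff]
    constructor
    · push_cast
      nlinarith
    · push_cast
      nlinarith
  unfold dyadicDigit
  rw [hfloor, Int.toNat_natCast]

lemma bit_ones {q m i : ℕ} (hi : i < m) :
    ((q * 2 ^ m + (2 ^ m - 1)) / 2 ^ i) % 2 = 1 := by
  have hb : 2 ^ m - 1 < 2 ^ m := Nat.sub_lt (by positivity) one_pos
  rw [Nat.mul_comm q (2 ^ m)]
  have ht := Nat.testBit_two_pow_mul_add q hb i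
  rw [if_pos hi, Nat.testBit_two_pow_sub_one] at ht
  have := Nat.testBit_eq_decide_div_mod_eq (x := 2 ^ m * q + (2 ^ m - 1)) (i := i)
  rw [ht] at this
  simp only [hi, decide_true, true_eq_decide_iff] at this
  exact this

lemma bit_zeros {q m i : ℕ} (hi : i < m) :
    ((q * 2 ^ m) / 2 ^ i) % 2 = 0 := by
  have hb : (0:ℕ) < 2 ^ m := by positivity
  rw [Nat.mul_comm q (2 ^ m)]
  have ht := Nat.testBit_two_pow_mul_add q (Nat.two_pow_pos m) i
  rw [if_pos hi] at ht
  simp only [Nat.zero_testBit] at ht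
  have := Nat.testBit_eq_decide_div_mod_eq (x := 2 ^ m * q + 0) (i := i)
  rw [ht] at this
  simp only [Nat.add_zero] at this
  have h2 : (2 ^ m * q) / 2 ^ i % 2 ≠ 1 := by
    intro h; simp [h] at this
  omega

def dyInt (n j : ℕ) : Set ℝ := Set.Ioo ((j : ℝ) / 2 ^ n) (((j : ℝ) + 1) / 2 ^ n)

lemma runLen_ge_ones {j n k : ℕ} (hkn : k ≤ n) {x : ℝ}
    (hx : x ∈ dyInt n (j * 2 ^ (n - k) + (2 ^ (n - k) - 1))) :
    n - k ≤ runLen x n := by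
  obtain ⟨hx1, hx2⟩ := hx
  refine le_runLen k (by omega) (fun t ht => ?_)
  have hk : k + t + 1 ≤ n := by omega
  rw [dyadicDigit_of_mem hk (le_of_lt (by exact_mod_cast hx1)) (by exact_mod_cast hx2)]
  have h1 : n - (k + t + 1) < n - k := by omega
  exact bit_ones h1

lemma runLen_le_zeros {j n k : ℕ} (hkn : k ≤ n) {x : ℝ}
    (hx : x ∈ dyInt n (j * 2 ^ (n - k))) :
    runLen x n ≤ k := by
  obtain ⟨hx1, hx2⟩ := hx
  refine runLen_le_of (fun ℓ i hi hd => ?_)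
  by_contra hlt
  push_neg at hlt
  have hp : i + (ℓ - 1) + 1 ≤ n := by omega
  have := hd (ℓ - 1) (by omega)
  rw [dyadicDigit_of_mem hp (le_of_lt (by exact_mod_cast hx1)) (by exact_mod_cast hx2)] at this
  have h1 : n - (i + (ℓ - 1) + 1) < n - k := by omega
  rw [bit_zeros h1] at this
  exact absurd this (by omega)

def patUnion (P : ℕ → ℕ → Prop) : Set ℝ := ⋃ n, ⋃ j, ⋃ (_ : P n j), dyInt n j

lemma isOpen_patUnion (P : ℕ → ℕ → Prop) : IsOpen (patUnion P) :=
  isOpen_iUnion fun _ => isOpen_iUnion fun _ => isOpen_iUnion fun _ => isOpen_Ioo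

lemma dyInt_subset {k j n j' : ℕ} (hkn : k ≤ n) (hlo : j * 2 ^ (n - k) ≤ j')
    (hhi : j' + 1 ≤ (j + 1) * 2 ^ (n - k)) :
    dyInt n j' ⊆ dyInt k j := by
  have hpow : (2 : ℝ) ^ n = 2 ^ k * 2 ^ (n - k) := by rw [← pow_add]; congr 1; omega
  have h2k : (0:ℝ) < 2 ^ k := by positivity
  have h2d : (0:ℝ) < 2 ^ (n - k) := by positivity
  have hlo' : (j : ℝ) * 2 ^ (n - k) ≤ j' := by exact_mod_cast hlo
  have hhi' : (j' : ℝ) + 1 ≤ ((j : ℝ) + 1) * 2 ^ (n - k) := by exact_mod_cast hhi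
  rintro y ⟨hy1, hy2⟩
  constructor
  · calc (j : ℝ) / 2 ^ k = (j : ℝ) * 2 ^ (n - k) / 2 ^ n := by rw [hpow]; field_simp
      _ ≤ (j' : ℝ) / 2 ^ n := by gcongr
      _ < y := hy1
  · calc y < ((j' : ℝ) + 1) / 2 ^ n := hy2
      _ ≤ ((j : ℝ) + 1) * 2 ^ (n - k) / 2 ^ n := by gcongr
      _ = ((j : ℝ) + 1) / 2 ^ k := by rw [hpow]; field_simp

lemma dense_patUnion_pre (P : ℕ → ℕ → Prop)
    (h : ∀ k j : ℕ, ∃ n j' : ℕ, k ≤ n ∧ j * 2 ^ (n - k) ≤ j' ∧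
      j' + 1 ≤ (j + 1) * 2 ^ (n - k) ∧ P n j') :
    Dense (((↑) : Set.Icc (0:ℝ) 1 → ℝ) ⁻¹' patUnion P) := by
  rw [dense_iff_inter_open]
  rintro U hU hUne
  obtain ⟨V, hV, rfl⟩ := isOpen_induced_iff.1 hU
  obtain ⟨⟨x, hx01⟩, hxV⟩ := hUne
  obtain ⟨ε, hε, hball⟩ := Metric.isOpen_iff.1 hV x hxV
  rw [Real.ball_eq_Ioo] at hball
  set a := max (x - ε / 2) 0 with ha
  set b := min (x + ε / 2) 1 with hb
  have hab : a < b := by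
    simp only [ha, hb, max_lt_iff, lt_min_iff]
    refine ⟨⟨?_, ?_⟩, ?_, ?_⟩ <;> linarith [hx01.1, hx01.2]
  have ha0 : 0 ≤ a := le_max_right _ _
  have hb1 : b ≤ 1 := min_le_right _ _
  have hsub : Set.Ioo a b ⊆ Set.Ioo (x - ε) (x + ε) := by
    apply Set.Ioo_subset_Ioo
    · simp only [ha, le_max_iff]; left; linarith
    · simp only [hb, min_le_iff]; left; linarith
  obtain ⟨k, hk⟩ := pow_unbounded_of_one_lt (2 / (b - a)) (one_lt_two (α := ℝ))
  have h2k : (0:ℝ) < 2 ^ k := by positivity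
  have hk2 : 2 / 2 ^ k < b - a := by
    rw [div_lt_iff₀ h2k] at *
    rw [div_lt_iff₀ (by linarith : (0:ℝ) < b - a)] at hk
    nlinarith
  set j := ⌈a * 2 ^ k⌉₊ with hj
  have haj : a ≤ (j : ℝ) / 2 ^ k := by
    rw [le_div_iff₀ h2k]; exact Nat.le_ceil _
  have hjb : ((j : ℝ) + 1) / 2 ^ k < b := by
    rw [div_lt_iff₀ h2k]
    have h1 := Nat.ceil_lt_add_one (by positivity : (0:ℝ) ≤ a * 2 ^ k)
    have h2 : 2 < (b - a) * 2 ^ k := (div_lt_iff₀ h2k).1 hk2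
    have : (j : ℝ) < a * 2 ^ k + 1 := h1
    nlinarith
  obtain ⟨n, j', hkn, hlo, hhi, hP⟩ := h k j
  have hsub2 : dyInt n j' ⊆ Set.Ioo a b := by
    refine (dyInt_subset hkn hlo hhi).trans ?_
    rintro y ⟨hy1, hy2⟩
    exact ⟨lt_of_le_of_lt haj hy1, lt_trans hy2 hjb⟩
  have h2n : (0:ℝ) < 2 ^ n := by positivity
  set y := ((j' : ℝ) + 1/2) / 2 ^ n with hy
  have hymem : y ∈ dyInt n j' := by
    constructor
    · rw [hy]; gcongr; linarith
    · rw [hy]; gcongr; linarith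
  have hyab : y ∈ Set.Ioo a b := hsub2 hymem
  have hyIcc : y ∈ Set.Icc (0:ℝ) 1 := ⟨le_of_lt (lt_of_le_of_lt ha0 hyab.1), le_of_lt (lt_of_lt_of_le hyab.2 hb1)⟩
  refine ⟨⟨y, hyIcc⟩, ?_, ?_⟩
  · exact hball (hsub hyab)
  · simp only [Set.mem_preimage, patUnion, Set.mem_iUnion]
    exact ⟨n, j', hP, hymem⟩

def PHigh (φ : ℕ → ℝ) (m N n j : ℕ) : Prop :=
  N ≤ n ∧ ∀ y ∈ dyInt n j, (m : ℝ) * φ n ≤ (runLen y n : ℝ)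

def PLow (φ : ℕ → ℝ) (m N n j : ℕ) : Prop :=
  N ≤ n ∧ ∀ y ∈ dyInt n j, (m : ℝ) * (runLen y n : ℝ) ≤ φ n

lemma dense_high (φ : ℕ → ℝ) (hpos : ∀ n, 0 < φ n) (hmono : Monotone φ)
    (hlimsup : Filter.atTop.limsup (fun n : ℕ => (((n : ℝ) / φ n : ℝ) : EReal)) = ⊤) (m N : ℕ) :
    Dense (((↑) : Set.Icc (0:ℝ) 1 → ℝ) ⁻¹' patUnion (PHigh φ m N)) := by
  apply dense_patUnion_pre
  intro k j
  -- find n ≥ max N k with m * φ n + k ≤ n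
  have hfr : ∃ᶠ n : ℕ in Filter.atTop,
      (((m : ℝ) + (k : ℝ) / φ 0 : ℝ) : EReal) < (((n : ℝ) / φ n : ℝ) : EReal) := by
    refine Filter.frequently_lt_of_lt_limsup Filter.isCobounded_le_of_bot ?_
    rw [hlimsup]
    exact EReal.coe_lt_top _
  obtain ⟨n, hn, hC⟩ := Filter.frequently_atTop.1 hfr (max N k)
  rw [EReal.coe_lt_coe_iff] at hC
  have hkn : k ≤ n := le_trans (le_max_right N k) hn
  have hNn : N ≤ n := le_trans (le_max_left N k) hn
  have hφn : 0 < φ n := hpos n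
  have hφ0 : 0 < φ 0 := hpos 0
  have hφ0n : φ 0 ≤ φ n := hmono (Nat.zero_le n)
  have hmain : (m : ℝ) * φ n + (k : ℝ) ≤ (n : ℝ) := by
    rw [lt_div_iff₀ hφn] at hC
    have h1 : (k : ℝ) / φ 0 * φ 0 ≤ (k : ℝ) / φ 0 * φ n :=
      mul_le_mul_of_nonneg_left hφ0n (div_nonneg (Nat.cast_nonneg k) hφ0.le)
    have h2 : (k : ℝ) / φ 0 * φ 0 = (k : ℝ) := div_mul_cancel₀ _ hφ0.ne'
    nlinarith
  have h2d : 1 ≤ 2 ^ (n - k) := Nat.one_le_two_pow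
  refine ⟨n, j * 2 ^ (n - k) + (2 ^ (n - k) - 1), hkn, Nat.le_add_right _ _, ?_, hNn, ?_⟩
  · have : (j + 1) * 2 ^ (n - k) = j * 2 ^ (n - k) + 2 ^ (n - k) := by ring
    omega
  · intro y hy
    have h5 : n - k ≤ runLen y n := runLen_ge_ones hkn hy
    have h6 : ((n - k : ℕ) : ℝ) ≤ (runLen y n : ℝ) := by exact_mod_cast h5
    rw [Nat.cast_sub hkn] at h6
    linarith

lemma dense_low (φ : ℕ → ℝ) (hpos : ∀ n, 0 < φ n)
    (htends : Filter.Tendsto φ Filter.atTop Filter.atTop) (m N : ℕ) :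
    Dense (((↑) : Set.Icc (0:ℝ) 1 → ℝ) ⁻¹' patUnion (PLow φ m N)) := by
  apply dense_patUnion_pre
  intro k j
  obtain ⟨n0, hn0⟩ := Filter.eventually_atTop.1 (htends.eventually_ge_atTop ((m : ℝ) * k))
  set n := max (max N k) n0 with hn
  have hkn : k ≤ n := le_trans (le_max_right N k) (le_max_left _ _)
  refine ⟨n, j * 2 ^ (n - k), hkn, le_refl _, ?_, ?_, ?_⟩
  · have h2d : 1 ≤ 2 ^ (n - k) := Nat.one_le_two_pow
    nlinarith
  · exact le_trans (le_max_left N k) (le_max_left _ _)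
  · intro y hy
    have h1 : runLen y n ≤ k := runLen_le_zeros hkn hy
    have h2 : (m : ℝ) * k ≤ φ n := hn0 n (le_max_right _ _)
    have h3 : (runLen y n : ℝ) ≤ k := by exact_mod_cast h1
    nlinarith [Nat.cast_nonneg (α := ℝ) m]

theorem Emax_residual (φ : ℕ → ℝ) (hpos : ∀ n, 0 < φ n) (hmono : Monotone φ)
    (htends : Tendsto φ atTop atTop)
    (hlimsup : atTop.limsup (fun n : ℕ => (((n : ℝ) / φ n : ℝ) : EReal)) = ⊤) :
    ((↑) : Set.Icc (0 : ℝ) 1 → ℝ) ⁻¹' Emax φ ∈ residual (Set.Icc (0 : ℝ) 1) := by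
  rw [mem_residual]
  have hopen : ∀ P : ℕ → ℕ → Prop,
      IsOpen (((↑) : Set.Icc (0:ℝ) 1 → ℝ) ⁻¹' patUnion P) :=
    fun P => (isOpen_patUnion P).preimage continuous_subtype_val
  refine ⟨⋂ p : ℕ × ℕ,
      (((↑) : Set.Icc (0:ℝ) 1 → ℝ) ⁻¹' patUnion (PHigh φ (p.1 + 1) p.2) ∩
       ((↑) : Set.Icc (0:ℝ) 1 → ℝ) ⁻¹' patUnion (PLow φ (p.1 + 1) p.2)), ?_, ?_, ?_⟩
  · rintro ⟨x, hx⟩ hmem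
    simp only [Set.mem_iInter] at hmem
    have HH : ∀ m N : ℕ, ∃ n, N ≤ n ∧ ((m : ℝ) + 1) * φ n ≤ (runLen x n : ℝ) := by
      intro m N
      have h := (hmem (m, N)).1
      simp only [Set.mem_preimage, patUnion, Set.mem_iUnion] at h
      obtain ⟨n, j, hP, hxy⟩ := h
      refine ⟨n, hP.1, ?_⟩
      have := hP.2 x hxy
      push_cast at this ⊢
      linarith
    have LL : ∀ m N : ℕ, ∃ n, N ≤ n ∧ ((m : ℝ) + 1) * (runLen x n : ℝ) ≤ φ n := by
      intro m N
      have h := (hmem (m, N)).2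
      simp only [Set.mem_preimage, patUnion, Set.mem_iUnion] at h
      obtain ⟨n, j, hP, hxy⟩ := h
      refine ⟨n, hP.1, ?_⟩
      have := hP.2 x hxy
      push_cast at this ⊢
      linarith
    refine ⟨hx, ?_, ?_⟩
    · -- liminf = 0
      have h0 : (0 : EReal) ≤ atTop.liminf fun n => ((runLen x n / φ n : ℝ) : EReal) := by
        apply Filter.le_liminf_of_le Filter.isCobounded_ge_of_top
        exact Filter.Eventually.of_forall fun n => by
          rw [← EReal.coe_zero, EReal.coe_le_coe_iff]
          exact div_nonneg (Nat.cast_nonneg _) (hpos n).le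
      have hle : atTop.liminf (fun n => ((runLen x n / φ n : ℝ) : EReal)) ≤ 0 := by
        by_contra hcon
        push_neg at hcon
        obtain ⟨c, hc0, hcl⟩ := EReal.lt_iff_exists_real_btwn.1 hcon
        have hc0' : (0 : ℝ) < c := by
          rw [← EReal.coe_zero, EReal.coe_lt_coe_iff] at hc0; exact hc0
        obtain ⟨mm, hmm⟩ := exists_nat_one_div_lt hc0'
        have hfreq : ∃ᶠ n in atTop,
            ((runLen x n / φ n : ℝ) : EReal) ≤ ((1 / ((mm : ℝ) + 1) : ℝ) : EReal) := by
          rw [Filter.frequently_atTop]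
          intro N
          obtain ⟨n, hnN, hr⟩ := LL mm N
          refine ⟨n, hnN, ?_⟩
          rw [EReal.coe_le_coe_iff, div_le_div_iff₀ (hpos n) (by positivity)]
          nlinarith
        have h1 := Filter.liminf_le_of_frequently_le' hfreq
        have h2 : ((1 / ((mm : ℝ) + 1) : ℝ) : EReal) < (c : EReal) := EReal.coe_lt_coe_iff.2 hmm
        exact lt_irrefl _ (lt_of_le_of_lt h1 (lt_trans h2 hcl))
      exact le_antisymm hle h0
    · -- limsup = ⊤
      rw [EReal.eq_top_iff_forall_lt]
      intro y
      have hfreq : ∃ᶠ n in atTop,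
          (((⌈y⌉₊ : ℝ) + 1 : ℝ) : EReal) ≤ ((runLen x n / φ n : ℝ) : EReal) := by
        rw [Filter.frequently_atTop]
        intro N
        obtain ⟨n, hnN, hr⟩ := HH ⌈y⌉₊ N
        refine ⟨n, hnN, ?_⟩
        rw [EReal.coe_le_coe_iff, le_div_iff₀ (hpos n)]
        exact hr
      have h1 := Filter.le_limsup_of_frequently_le' hfreq
      have h2 : (y : EReal) < (((⌈y⌉₊ : ℝ) + 1 : ℝ) : EReal) :=
        EReal.coe_lt_coe_iff.2 ((Nat.le_ceil y).trans_lt (lt_add_one _))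
      exact lt_of_lt_of_le h2 h1
  · exact IsGδ.iInter fun p => ((hopen _).inter (hopen _)).isGδ
  · apply dense_iInter_of_isOpen
    · intro p
      exact (hopen _).inter (hopen _)
    · intro p
      exact (dense_high φ hpos hmono hlimsup (p.1 + 1) p.2).inter_of_isOpen_left
        (dense_low φ hpos htends (p.1 + 1) p.2) (hopen _)
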